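/- Let g be an inner product on V and let φ be a nonzero alternating m-form on V. Then the set { Real.sqrt (det (G_g v)) | v : Fin m → V with φ v = 1 } is nonempty and comass g φ = (sInf { Real.sqrt (det (G_g v)) | v : Fin m → V with φ v = 1 })⁻¹. -/

import Mathlib

open Matrix

/-- The Gram matrix of an `m`-tuple of vectors with respect to a bilinear form `g`. -/
noncomputable def gramMat {V : Type*} [AddCommGroup V] [Module ℝ V] (m : ℕ)
    (g : LinearMap.BilinForm ℝ V) (v : Fin m → V) : Matrix (Fin m) (Fin m) ℝ :=
  Matrix.of fun i j => g (v i) (v j)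

/-- The comass of an alternating `m`-form `φ` with respect to a bilinear form `g`. -/
noncomputable def comass {V : Type*} [AddCommGroup V] [Module ℝ V] (m : ℕ)
    (g : LinearMap.BilinForm ℝ V) (φ : V [⋀^Fin m]→ₗ[ℝ] ℝ) : ℝ :=
  sSup {x : ℝ | ∃ v : Fin m → V, (gramMat m g v).det ≠ 0 ∧
    x = φ v / Real.sqrt (gramMat m g v).det}

section Aux

variable {V : Type*} [AddCommGroup V] [Module ℝ V] {m : ℕ}
  {g : LinearMap.BilinForm ℝ V}

lemma gram_mulVec (v : Fin m → V) (x : Fin m → ℝ) :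
    (gramMat m g v) *ᵥ x = fun a => g (v a) (∑ b, x b • v b) := by
  funext a
  simp [Matrix.mulVec, dotProduct, gramMat, map_sum, _root_.map_smul, mul_comm,
    smul_eq_mul]

lemma gram_posDef (hsymm : g.IsSymm) (hpos : ∀ v : V, v ≠ 0 → 0 < g v v)
    {v : Fin m → V} (hli : LinearIndependent ℝ v) : (gramMat m g v).PosDef := by
  have hsymm' : ∀ x y : V, g x y = g y x := fun x y => by simpa using hsymm.eq x y
  apply Matrix.PosDef.of_dotProduct_mulVec_pos
  · ext i j
    simpa [gramMat, Matrix.conjTranspose_apply] using (hsymm' (v j) (v i))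
  · intro x hx
    have hsum : (∑ b, x b • v b) ≠ 0 := by
      intro h0
      apply hx
      funext i
      exact Fintype.linearIndependent_iff.mp hli x h0 i
    have : (star x) ⬝ᵥ ((gramMat m g v) *ᵥ x)
        = g (∑ a, x a • v a) (∑ b, x b • v b) := by
      rw [gram_mulVec]
      simp only [star_trivial, dotProduct, map_sum, LinearMap.sum_apply,
        _root_.map_smul, LinearMap.smul_apply, smul_eq_mul]
      refine Finset.sum_congr rfl fun a _ => ?_
      rw [Finset.mul_sum, Finset.mul_sum]
      refine Finset.sum_congr rfl fun b _ => ?_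
      rw [hsymm' (v b) (v a)]
    rw [this]
    exact hpos _ hsum

lemma li_of_gram_det_ne (v : Fin m → V) (h : (gramMat m g v).det ≠ 0) :
    LinearIndependent ℝ v := by
  by_contra hli
  obtain ⟨x, hx0, i, hxi⟩ := Fintype.not_linearIndependent_iff.mp hli
  apply h
  rw [← Matrix.exists_mulVec_eq_zero_iff]
  refine ⟨x, fun hx => hxi (congrFun hx i), ?_⟩
  rw [gram_mulVec]
  funext a
  simp [hx0]

lemma gram_det_pos (hsymm : g.IsSymm) (hpos : ∀ v : V, v ≠ 0 → 0 < g v v)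
    {v : Fin m → V} (hli : LinearIndependent ℝ v) : 0 < (gramMat m g v).det :=
  (gram_posDef hsymm hpos hli).det_pos

lemma gram_det_update (v : Fin m → V) (i : Fin m) (c : ℝ) :
    (gramMat m g (Function.update v i (c • v i))).det = c ^ 2 * (gramMat m g v).det := by
  set N : Matrix (Fin m) (Fin m) ℝ := gramMat m g v with hN
  set M' : Matrix (Fin m) (Fin m) ℝ := N.updateCol i (c • fun a => N a i) with hM'
  have key : gramMat m g (Function.update v i (c • v i)) = M'.updateRow i (c • M' i) := by
    ext a b
    by_cases ha : a = i <;> by_cases hb : b = i <;>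
      simp [gramMat, hM', hN, Matrix.updateRow_apply, Matrix.updateCol_apply, ha, hb,
        Function.update_apply, _root_.map_smul, LinearMap.smul_apply, smul_eq_mul, mul_assoc, mul_comm, mul_left_comm]
  rw [key, Matrix.det_updateRow_smul, Matrix.updateRow_eq_self, hM',
    Matrix.det_updateCol_smul, Matrix.updateCol_eq_self]
  ring

lemma phi_update (φ : V [⋀^Fin m]→ₗ[ℝ] ℝ) (v : Fin m → V) (i : Fin m) (c : ℝ) :
    φ (Function.update v i (c • v i)) = c * φ v := by
  rw [φ.map_update_smul, Function.update_eq_self]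
  rfl

end Aux

/-- Characterization of comass: `‖φ‖* = 1 / min { ‖W‖ : W simple with φ(W) = 1 }`. -/
theorem comass_eq_inv_sInf {V : Type*} [AddCommGroup V] [Module ℝ V]
    [FiniteDimensional ℝ V] (m : ℕ) (hm : 1 ≤ m) (hm' : m ≤ Module.finrank ℝ V)
    (g : LinearMap.BilinForm ℝ V) (hsymm : g.IsSymm)
    (hpos : ∀ v : V, v ≠ 0 → 0 < g v v)
    (φ : V [⋀^Fin m]→ₗ[ℝ] ℝ) (hφ : φ ≠ 0) :
    {x : ℝ | ∃ v : Fin m → V, φ v = 1 ∧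
        x = Real.sqrt (gramMat m g v).det}.Nonempty ∧
      comass m g φ =
        (sInf {x : ℝ | ∃ v : Fin m → V, φ v = 1 ∧
          x = Real.sqrt (gramMat m g v).det})⁻¹ := by
  classical
  set S := {x : ℝ | ∃ v : Fin m → V, φ v = 1 ∧ x = Real.sqrt (gramMat m g v).det} with hS
  set A := {x : ℝ | ∃ v : Fin m → V, (gramMat m g v).det ≠ 0 ∧
    x = φ v / Real.sqrt (gramMat m g v).det} with hA
  have i0 : Fin m := ⟨0, hm⟩
  -- det positivity on the φ = 1 set
  have det_pos_of_one : ∀ v : Fin m → V, φ v ≠ 0 → 0 < (gramMat m g v).det := by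
    intro v hv
    refine gram_det_pos hsymm hpos ?_
    by_contra hli
    exact hv (φ.map_linearDependent v hli)
  -- S is nonempty
  have hSne : S.Nonempty := by
    obtain ⟨v, hv⟩ : ∃ v : Fin m → V, φ v ≠ 0 := by
      by_contra h
      push_neg at h
      exact hφ (AlternatingMap.ext fun v => by simp [h v])
    refine ⟨Real.sqrt (gramMat m g (Function.update v i0 ((φ v)⁻¹ • v i0))).det,
      Function.update v i0 ((φ v)⁻¹ • v i0), ?_, rfl⟩
    rw [phi_update]
    exact inv_mul_cancel₀ hv
  -- elements of S are positive and their inverses lie in A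
  have hSpos : ∀ s ∈ S, 0 < s := by
    rintro s ⟨v, hv1, rfl⟩
    exact Real.sqrt_pos.mpr (det_pos_of_one v (by rw [hv1]; norm_num))
  have hSA : ∀ s ∈ S, s⁻¹ ∈ A := by
    rintro s ⟨v, hv1, rfl⟩
    have hd : 0 < (gramMat m g v).det := det_pos_of_one v (by rw [hv1]; norm_num)
    exact ⟨v, hd.ne', by rw [hv1, one_div]⟩
  -- elements of A are either nonpositive, or positive with inverse in S
  have hAS : ∀ a ∈ A, a ≤ 0 ∨ (0 < a ∧ a⁻¹ ∈ S) := by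
    rintro a ⟨v, hdet, rfl⟩
    have hd : 0 < (gramMat m g v).det :=
      gram_det_pos hsymm hpos (li_of_gram_det_ne v hdet)
    have hs : 0 < Real.sqrt (gramMat m g v).det := Real.sqrt_pos.mpr hd
    rcases le_or_gt (φ v) 0 with hc | hc
    · exact Or.inl (div_nonpos_iff.mpr (Or.inr ⟨hc, hs.le⟩))
    · refine Or.inr ⟨div_pos hc hs, ?_⟩
      refine ⟨Function.update v i0 ((φ v)⁻¹ • v i0), ?_, ?_⟩
      · rw [phi_update]
        exact inv_mul_cancel₀ hc.ne'
      · rw [gram_det_update, Real.sqrt_mul (sq_nonneg _),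
          Real.sqrt_sq (inv_nonneg.mpr hc.le), inv_div, div_eq_inv_mul]
  obtain ⟨s0, hs0S⟩ := hSne
  have hAne : A.Nonempty := ⟨s0⁻¹, hSA s0 hs0S⟩
  have hSne : S.Nonempty := ⟨s0, hs0S⟩
  have hSbdd : BddBelow S := ⟨0, fun s hs => (hSpos s hs).le⟩
  refine ⟨hSne, ?_⟩
  show sSup A = (sInf S)⁻¹
  set t := sInf S with ht
  have ht0 : 0 ≤ t := le_csInf hSne fun s hs => (hSpos s hs).le
  rcases eq_or_lt_of_le ht0 with ht0' | ht0'
  ·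
    have hnb : ¬ BddAbove A := by
      rintro ⟨M, hM⟩
      have hε : 0 < (max M 1)⁻¹ :=
        inv_pos.mpr (lt_of_lt_of_le one_pos (le_max_right M 1))
      obtain ⟨s, hsS, hslt⟩ := (csInf_lt_iff hSbdd hSne).mp (ht0' ▸ hε)
      have h1 : (max M 1) < s⁻¹ := by
        have := inv_strictAnti₀ (hSpos s hsS) hslt
        rwa [inv_inv] at this
      have h2 : s⁻¹ ≤ M := hM (hSA s hsS)
      have h3 : M ≤ max M 1 := le_max_left M 1
      linarith
    rw [Real.sSup_of_not_bddAbove hnb, ← ht0', _root_.inv_zero]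
  · have hub : ∀ a ∈ A, a ≤ t⁻¹ := by
      intro a ha
      rcases hAS a ha with h | ⟨hapos, hainv⟩
      · exact h.trans (inv_nonneg.mpr ht0)
      · have h1 : t ≤ a⁻¹ := csInf_le hSbdd hainv
        have := inv_anti₀ ht0' h1
        rwa [inv_inv] at this
    have hbdd : BddAbove A := ⟨t⁻¹, hub⟩
    refine le_antisymm (csSup_le hAne hub) ?_
    have hsup_pos : 0 < sSup A :=
      lt_of_lt_of_le (inv_pos.mpr (hSpos s0 hs0S)) (le_csSup hbdd (hSA s0 hs0S))
    have h2 : (sSup A)⁻¹ ≤ t := by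
      refine le_csInf hSne fun s hs => ?_
      have h3 : s⁻¹ ≤ sSup A := le_csSup hbdd (hSA s hs)
      have := inv_anti₀ (inv_pos.mpr (hSpos s hs)) h3
      rwa [inv_inv] at this
    have := inv_anti₀ (inv_pos.mpr hsup_pos) h2
    rwa [inv_inv] at this
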